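/- Bound on the image of the residual: Under the assumptions that b = A x̄ with x̄ s-sparse supported on S, h(x*) ≤ h(x̄) where h(x) = (1/2)‖Ax−b‖_2^2 + λ(‖x‖_1 − ‖x‖_2), and A satisfies the ℓ_{1-2}-REC(s,s), it holds that ‖A x* − A x̄‖_2 ≤ 2λ(√s + 1)/φ(s,s). -/
import Mathlib

open Finset

noncomputable def l1 {k : ℕ} (x : Fin k → ℝ) : ℝ := ∑ i, |x i|

noncomputable def l2 {k : ℕ} (x : Fin k → ℝ) : ℝ := Real.sqrt (∑ i, (x i)^2)

def restr {k : ℕ} (I : Finset (Fin k)) (x : Fin k → ℝ) : Fin k → ℝ :=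
  fun i => if i ∈ I then x i else 0


def TLargest {k : ℕ} (x : Fin k → ℝ) (I : Finset (Fin k)) (t : ℕ) (T : Finset (Fin k)) : Prop :=
  T ⊆ Iᶜ ∧ T.card = min t Iᶜ.card ∧ ∀ i ∈ T, ∀ j ∈ Iᶜ \ T, |x j| ≤ |x i|

lemma l2_nonneg {k : ℕ} (x : Fin k → ℝ) : 0 ≤ l2 x := Real.sqrt_nonneg _

lemma l2_sq {k : ℕ} (x : Fin k → ℝ) : (l2 x)^2 = ∑ i, (x i)^2 :=
  Real.sq_sqrt (Finset.sum_nonneg fun i _ => sq_nonneg _)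

lemma l2_add_le {k : ℕ} (x y : Fin k → ℝ) : l2 (x + y) ≤ l2 x + l2 y := by
  have hxy : ∑ i, x i * y i ≤ l2 x * l2 y := by
    calc ∑ i, x i * y i ≤ |∑ i, x i * y i| := le_abs_self _
    _ = Real.sqrt ((∑ i, x i * y i)^2) := (Real.sqrt_sq_eq_abs _).symm
    _ ≤ Real.sqrt ((∑ i, (x i)^2) * (∑ i, (y i)^2)) :=
        Real.sqrt_le_sqrt (Finset.sum_mul_sq_le_sq_mul_sq _ _ _)
    _ = l2 x * l2 y := Real.sqrt_mul (Finset.sum_nonneg fun i _ => sq_nonneg _) _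
  have h1 : ∑ i, (x i + y i)^2 ≤ (l2 x + l2 y)^2 := by
    have hx := l2_sq x; have hy := l2_sq y
    have exp : ∑ i, (x i + y i)^2 =
        (∑ i, (x i)^2) + (∑ i, 2 * (x i * y i)) + ∑ i, (y i)^2 := by
      rw [← Finset.sum_add_distrib, ← Finset.sum_add_distrib]
      apply Finset.sum_congr rfl
      intros; ring
    rw [← Finset.mul_sum] at exp
    nlinarith [hxy, hx, hy, exp]
  calc l2 (x + y) = Real.sqrt (∑ i, (x i + y i)^2) := rfl
  _ ≤ Real.sqrt ((l2 x + l2 y)^2) := Real.sqrt_le_sqrt h1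
  _ = |l2 x + l2 y| := Real.sqrt_sq_eq_abs _
  _ = l2 x + l2 y := abs_of_nonneg (add_nonneg (l2_nonneg x) (l2_nonneg y))

lemma l2_sub_le {k : ℕ} (x y : Fin k → ℝ) : l2 x - l2 y ≤ l2 (x - y) := by
  have := l2_add_le (x - y) y
  simp only [sub_add_cancel] at this
  linarith

lemma l1_sub_le {k : ℕ} (x y : Fin k → ℝ) : l1 x - l1 y ≤ l1 (x - y) := by
  rw [l1, l1, l1, ← Finset.sum_sub_distrib]
  apply Finset.sum_le_sum
  intro i _
  have := abs_sub_abs_le_abs_sub (x i) (y i)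
  simpa using this

lemma l2_le_l1 {k : ℕ} (x : Fin k → ℝ) : l2 x ≤ l1 x := by
  have hl1 : (0:ℝ) ≤ l1 x := Finset.sum_nonneg fun i _ => abs_nonneg _
  rw [l2, ← Real.sqrt_sq hl1]
  apply Real.sqrt_le_sqrt
  rw [l1]
  have : ∀ i, (x i)^2 = |x i|^2 := fun i => (sq_abs _).symm
  simp_rw [this]
  exact Finset.sum_sq_le_sq_sum_of_nonneg (fun i _ => abs_nonneg _)

lemma restr_add_compl {k : ℕ} (I : Finset (Fin k)) (x : Fin k → ℝ) :
    restr I x + restr Iᶜ x = x := by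
  funext i
  simp only [restr, Pi.add_apply, Finset.mem_compl]
  by_cases h : i ∈ I <;> simp [h]

lemma l1_restr_union_compl {k : ℕ} (I : Finset (Fin k)) (x : Fin k → ℝ) :
    l1 x = l1 (restr I x) + l1 (restr Iᶜ x) := by
  rw [l1, l1, l1, ← Finset.sum_add_distrib]
  apply Finset.sum_congr rfl
  intro i _
  simp only [restr, Finset.mem_compl]
  by_cases h : i ∈ I <;> simp [h]

lemma restr_sub {k : ℕ} (I : Finset (Fin k)) (x y : Fin k → ℝ) :
    restr I (x - y) = restr I x - restr I y := by
  funext i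
  simp only [restr, Pi.sub_apply]
  by_cases h : i ∈ I <;> simp [h]

lemma l1_restr_le_sqrt_card {k : ℕ} (I : Finset (Fin k)) (x : Fin k → ℝ) :
    l1 (restr I x) ≤ Real.sqrt I.card * l2 (restr I x) := by
  have h1 : l1 (restr I x) = ∑ i ∈ I, |x i| := by
    rw [l1, ← Finset.sum_subset (Finset.subset_univ I)]
    · apply Finset.sum_congr rfl; intro i hi; simp [restr, hi]
    · intro i _ hi; simp [restr, hi]
  have h2 : (l2 (restr I x))^2 = ∑ i ∈ I, (x i)^2 := by
    rw [l2_sq, ← Finset.sum_subset (Finset.subset_univ I)]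
    · apply Finset.sum_congr rfl; intro i hi; simp [restr, hi]
    · intro i _ hi; simp [restr, hi]
  rw [h1]
  have hcs : (∑ i ∈ I, 1 * |x i|)^2 ≤ (∑ i ∈ I, (1:ℝ)^2) * (∑ i ∈ I, |x i|^2) :=
    Finset.sum_mul_sq_le_sq_mul_sq _ _ _
  simp only [one_mul, one_pow, Finset.sum_const, nsmul_eq_mul, mul_one, sq_abs] at hcs
  calc ∑ i ∈ I, |x i| = Real.sqrt ((∑ i ∈ I, |x i|)^2) := by
        rw [Real.sqrt_sq (Finset.sum_nonneg fun i _ => abs_nonneg _)]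
  _ ≤ Real.sqrt ((I.card : ℝ) * ∑ i ∈ I, (x i)^2) := Real.sqrt_le_sqrt hcs
  _ = Real.sqrt I.card * Real.sqrt (∑ i ∈ I, (x i)^2) := Real.sqrt_mul (Nat.cast_nonneg _) _
  _ = Real.sqrt I.card * l2 (restr I x) := by
        rw [← h2, Real.sqrt_sq (l2_nonneg _)]

lemma l2_restr_mono {k : ℕ} {I J : Finset (Fin k)} (h : I ⊆ J) (x : Fin k → ℝ) :
    l2 (restr I x) ≤ l2 (restr J x) := by
  apply Real.sqrt_le_sqrt
  apply Finset.sum_le_sum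
  intro i _
  by_cases hi : i ∈ I
  · simp [restr, hi, h hi]
  · have e : restr I x i = 0 := by simp [restr, hi]
    rw [e]
    simpa using sq_nonneg (restr J x i)

lemma exists_top {k : ℕ} (x : Fin k → ℝ) (U : Finset (Fin k)) :
    ∀ t, t ≤ U.card → ∃ T ⊆ U, T.card = t ∧ ∀ i ∈ T, ∀ j ∈ U \ T, |x j| ≤ |x i| := by
  intro t
  induction t with
  | zero => intro _; exact ⟨∅, Finset.empty_subset _, rfl, by simp⟩
  | succ nn ih =>
    intro ht
    obtain ⟨T, hTU, hcard, hmax⟩ := ih (le_of_lt (Nat.lt_of_succ_le ht))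
    have hne : (U \ T).Nonempty := by
      rw [← Finset.card_pos, Finset.card_sdiff_of_subset hTU]; omega
    obtain ⟨j0, hj0, hj0max⟩ := (U \ T).exists_max_image (fun j => |x j|) hne
    refine ⟨insert j0 T, ?_, ?_, ?_⟩
    · exact Finset.insert_subset (Finset.mem_sdiff.mp hj0).1 hTU
    · rw [Finset.card_insert_of_notMem (Finset.mem_sdiff.mp hj0).2, hcard]
    · intro i hi j hj
      have hjT : j ∈ U \ T :=
        Finset.sdiff_subset_sdiff (le_refl U) (Finset.subset_insert _ _) hj
      rcases Finset.mem_insert.mp hi with rfl | hiT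
      · exact hj0max j hjT
      · exact hmax i hiT j hjT

lemma exists_TLargest {k : ℕ} (x : Fin k → ℝ) (I : Finset (Fin k)) (t : ℕ) :
    ∃ T, TLargest x I t T := by
  obtain ⟨T, hTU, hcard, hmax⟩ := exists_top x Iᶜ (min t Iᶜ.card) (min_le_right _ _)
  exact ⟨T, hTU, hcard, hmax⟩

set_option maxHeartbeats 800000 in
theorem stmt14 {m n : ℕ} (A : Matrix (Fin m) (Fin n) ℝ) (xbar xstar : Fin n → ℝ)
    (b : Fin m → ℝ) (S : Finset (Fin n)) (s : ℕ) (lam φ : ℝ) (hlam : 0 < lam)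
    (hb : b = A.mulVec xbar) (hsupp : ∀ i, xbar i ≠ 0 ↔ i ∈ S) (hcardS : S.card = s)
    (hφ : 0 < φ)
    (hREC : ∀ (x : Fin n → ℝ) (I T : Finset (Fin n)), I.card ≤ s →
      l1 (restr Iᶜ x) ≤ l1 (restr I x) + l2 x → TLargest x I s T →
      φ * l2 (restr (I ∪ T) x) ≤ l2 (A.mulVec x))
    (hlev : (1/2) * (l2 (A.mulVec xstar - b))^2 + lam * (l1 xstar - l2 xstar) ≤
            (1/2) * (l2 (A.mulVec xbar - b))^2 + lam * (l1 xbar - l2 xbar)) :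
    l2 (A.mulVec xstar - A.mulVec xbar) ≤ 2 * lam * (Real.sqrt s + 1) / φ := by
  set h : Fin n → ℝ := xstar - xbar with hh
  have hAh : A.mulVec xstar - A.mulVec xbar = A.mulVec h := (A.mulVec_sub _ _).symm
  set D : ℝ := l2 (A.mulVec h) with hD
  have hDnn : 0 ≤ D := l2_nonneg _
  -- simplify hlev
  have hzero : l2 (A.mulVec xbar - b) = 0 := by
    rw [hb, sub_self]
    simp [l2]
  have hlev' : (1/2) * D^2 ≤ lam * ((l1 xbar - l1 xstar) + (l2 xstar - l2 xbar)) := by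
    have : A.mulVec xstar - b = A.mulVec h := by rw [hb, hAh]
    rw [this, hzero] at hlev
    nlinarith [hlev]
  -- l1 xbar = l1 (restr S xbar)
  have hzeroOff : ∀ i, i ∉ S → xbar i = 0 := by
    intro i hi
    by_contra hc
    exact hi ((hsupp i).mp hc)
  have hxbarS : restr S xbar = xbar := by
    funext i
    by_cases hi : i ∈ S
    · simp [restr, hi]
    · simp [restr, hi, hzeroOff i hi]
  have hxbarSc : restr Sᶜ xbar = 0 := by
    funext i
    by_cases hi : i ∈ S
    · simp [restr, hi]
    · simp [restr, hi, hzeroOff i hi]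
  -- key bracket bound
  have hbr1 : l1 xbar - l1 xstar ≤ l1 (restr S h) - l1 (restr Sᶜ h) := by
    have e1 : l1 xbar = l1 (restr S xbar) := by rw [hxbarS]
    have e2 : l1 xstar = l1 (restr S xstar) + l1 (restr Sᶜ xstar) :=
      l1_restr_union_compl S xstar
    have e3 : restr Sᶜ xstar = restr Sᶜ h := by
      rw [hh, restr_sub, hxbarSc, sub_zero]
    have e4 : l1 (restr S xbar) - l1 (restr S xstar) ≤ l1 (restr S h) := by
      have := l1_sub_le (restr S xbar) (restr S xstar)
      have e5 : restr S xbar - restr S xstar = restr S (xbar - xstar) := (restr_sub _ _ _).symm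
      have e6 : l1 (restr S (xbar - xstar)) = l1 (restr S h) := by
        rw [hh]
        have : restr S (xbar - xstar) = -(restr S (xstar - xbar)) := by
          rw [restr_sub, restr_sub]; abel
        rw [this, l1, l1]
        simp
      rw [e5, e6] at this
      linarith
    rw [e1, e2, e3]
    linarith
  have hbr2 : l2 xstar - l2 xbar ≤ l2 h := by
    have := l2_sub_le xstar xbar
    rw [← hh] at this
    exact this
  -- l2 h ≤ l2 (restr S h) + l1 (restr Sᶜ h)
  have hbr3 : l2 h ≤ l2 (restr S h) + l1 (restr Sᶜ h) := by
    calc l2 h = l2 (restr S h + restr Sᶜ h) := by rw [restr_add_compl]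
    _ ≤ l2 (restr S h) + l2 (restr Sᶜ h) := l2_add_le _ _
    _ ≤ l2 (restr S h) + l1 (restr Sᶜ h) := by
        have := l2_le_l1 (restr Sᶜ h); linarith
  have hkey : (1/2) * D^2 ≤ lam * (l1 (restr S h) - l1 (restr Sᶜ h) + l2 h) := by
    have : (l1 xbar - l1 xstar) + (l2 xstar - l2 xbar) ≤
        l1 (restr S h) - l1 (restr Sᶜ h) + l2 h := by linarith
    nlinarith [this]
  -- case split on cone condition
  by_cases hcone : l1 (restr Sᶜ h) ≤ l1 (restr S h) + l2 h
  · -- REC applies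
    obtain ⟨T, hT⟩ := exists_TLargest h S s
    have hrec := hREC h S T (le_of_eq hcardS) hcone hT
    have hmono : l2 (restr S h) ≤ l2 (restr (S ∪ T) h) :=
      l2_restr_mono (Finset.subset_union_left) h
    have hl1S : l1 (restr S h) ≤ Real.sqrt s * l2 (restr S h) := by
      have := l1_restr_le_sqrt_card S h
      rw [hcardS] at this
      exact this
    have hchain : (1/2) * D^2 ≤ lam * (Real.sqrt s + 1) * (D / φ) := by
      have hb1 : l1 (restr S h) - l1 (restr Sᶜ h) + l2 h ≤
          (Real.sqrt s + 1) * l2 (restr S h) := by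
        have := l2_le_l1 (restr Sᶜ h)
        nlinarith [hbr3]
      have hb2 : l2 (restr S h) ≤ D / φ := by
        rw [le_div_iff₀ hφ]
        calc l2 (restr S h) * φ = φ * l2 (restr S h) := by ring
        _ ≤ φ * l2 (restr (S ∪ T) h) := by nlinarith
        _ ≤ D := hrec
      have hs1 : (0:ℝ) ≤ Real.sqrt s + 1 := by positivity
      calc (1/2) * D^2 ≤ lam * ((Real.sqrt s + 1) * l2 (restr S h)) := by nlinarith [hkey, hb1]
      _ ≤ lam * (Real.sqrt s + 1) * (D / φ) := by
          rw [← mul_assoc]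
          apply mul_le_mul_of_nonneg_left hb2 (by positivity)
    -- conclude: D^2 ≤ 2 lam (√s+1) D/φ
    rw [hAh, ← hD]
    by_cases hD0 : D = 0
    · rw [hD0]; positivity
    · have hDpos : 0 < D := lt_of_le_of_ne hDnn (Ne.symm hD0)
      have h2 : D * D ≤ (2 * lam * (Real.sqrt s + 1) / φ) * D := by
        have e : (2 * lam * (Real.sqrt s + 1) / φ) * D =
            2 * (lam * (Real.sqrt s + 1) * (D / φ)) := by ring
        have e2 : D * D = D ^ 2 := (sq D).symm
        rw [e, e2]
        linarith [hchain]
      exact le_of_mul_le_mul_right h2 hDpos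
  · -- cone fails: bracket negative, contradiction
    push_neg at hcone
    exfalso
    have hneg : l1 (restr S h) - l1 (restr Sᶜ h) + l2 h < 0 := by linarith
    nlinarith [hkey, sq_nonneg D]
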